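/- Let a = −1 and let f : ℝ → ℝ be differentiable. Then the Fréchet derivative (Jacobian matrix) of V_{−1,f} at the point (0,0,1) is [[−2, −f(0), 0], [f(0), −2, 0], [0, 0, 4]], with determinant 4(4 + f(0)²) > 0, and the Jacobian at (0,0,−1) is [[2, −f(0), 0], [f(0), 2, 0], [0, 0, −4]], with determinant −4(4 + f(0)²) < 0. In particular, both zeros of V_{−1,f} are nondegenerate. -/

import Mathlib

/-- `H_a(x,y,z) = (x² + y²)(x² + y² + z² + a)`. -/
noncomputable def Ha3 (a : ℝ) : ℝ × ℝ × ℝ → ℝ :=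
  fun p => (p.1 ^ 2 + p.2.1 ^ 2) * (p.1 ^ 2 + p.2.1 ^ 2 + p.2.2 ^ 2 + a)

/-- The vortex-plug vector field
`V_{a,f}(x,y,z) = (−2xz − f(H_a)·y, −2yz + f(H_a)·x, 2(2(x²+y²)+z²+a))`. -/
noncomputable def Vaf (a : ℝ) (f : ℝ → ℝ) : ℝ × ℝ × ℝ → ℝ × ℝ × ℝ :=
  fun p =>
    (-2 * p.1 * p.2.2 - f (Ha3 a p) * p.2.1,
      -2 * p.2.1 * p.2.2 + f (Ha3 a p) * p.1,
      2 * (2 * (p.1 ^ 2 + p.2.1 ^ 2) + p.2.2 ^ 2 + a))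

noncomputable def Q1 : (ℝ×ℝ×ℝ) →L[ℝ] ℝ := ContinuousLinearMap.fst ℝ ℝ (ℝ×ℝ)
noncomputable def Q2 : (ℝ×ℝ×ℝ) →L[ℝ] ℝ := (ContinuousLinearMap.fst ℝ ℝ ℝ).comp (ContinuousLinearMap.snd ℝ ℝ (ℝ×ℝ))
noncomputable def Q3 : (ℝ×ℝ×ℝ) →L[ℝ] ℝ := (ContinuousLinearMap.snd ℝ ℝ ℝ).comp (ContinuousLinearMap.snd ℝ ℝ (ℝ×ℝ))

@[simp] lemma Q1_apply (q : ℝ×ℝ×ℝ) : Q1 q = q.1 := rfl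
@[simp] lemma Q2_apply (q : ℝ×ℝ×ℝ) : Q2 q = q.2.1 := rfl
@[simp] lemma Q3_apply (q : ℝ×ℝ×ℝ) : Q3 q = q.2.2 := rfl

lemma hQ1 (p : ℝ×ℝ×ℝ) : HasFDerivAt (fun p : ℝ×ℝ×ℝ => p.1) Q1 p := hasFDerivAt_fst
lemma hQ2 (p : ℝ×ℝ×ℝ) : HasFDerivAt (fun p : ℝ×ℝ×ℝ => p.2.1) Q2 p :=
  HasFDerivAt.comp p (hasFDerivAt_fst (𝕜 := ℝ) (E := ℝ) (F := ℝ) (p := p.2))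
    (hasFDerivAt_snd (𝕜 := ℝ) (E := ℝ) (F := ℝ×ℝ) (p := p))
lemma hQ3 (p : ℝ×ℝ×ℝ) : HasFDerivAt (fun p : ℝ×ℝ×ℝ => p.2.2) Q3 p :=
  HasFDerivAt.comp p (hasFDerivAt_snd (𝕜 := ℝ) (E := ℝ) (F := ℝ) (p := p.2))
    (hasFDerivAt_snd (𝕜 := ℝ) (E := ℝ) (F := ℝ×ℝ) (p := p))

noncomputable def clm3 (a11 a12 a21 a22 a33 : ℝ) : (ℝ×ℝ×ℝ) →L[ℝ] ℝ×ℝ×ℝ :=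
  (a11 • Q1 + a12 • Q2).prod ((a21 • Q1 + a22 • Q2).prod (a33 • Q3))

@[simp] lemma clm3_apply (a11 a12 a21 a22 a33 : ℝ) (q : ℝ×ℝ×ℝ) :
    clm3 a11 a12 a21 a22 a33 q =
      (a11*q.1 + a12*q.2.1, a21*q.1 + a22*q.2.1, a33*q.2.2) := rfl

lemma keyD (f : ℝ → ℝ) (hf : Differentiable ℝ f) (z0 : ℝ) :
    HasFDerivAt (Vaf (-1) f) (clm3 (-2*z0) (-(f 0)) (f 0) (-2*z0) (4*z0)) (0,0,z0) := by
  set p0 : ℝ×ℝ×ℝ := (0,0,z0) with hp0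
  have hx := hQ1 p0
  have hy := hQ2 p0
  have hz := hQ3 p0
  have hx2 : HasFDerivAt (fun p : ℝ×ℝ×ℝ => p.1^2) (p0.1 • Q1 + p0.1 • Q1) p0 := by
    simpa only [pow_two, Pi.mul_def] using hx.mul hx
  have hy2 : HasFDerivAt (fun p : ℝ×ℝ×ℝ => p.2.1^2) (p0.2.1 • Q2 + p0.2.1 • Q2) p0 := by
    simpa only [pow_two, Pi.mul_def] using hy.mul hy
  have hz2 : HasFDerivAt (fun p : ℝ×ℝ×ℝ => p.2.2^2) (p0.2.2 • Q3 + p0.2.2 • Q3) p0 := by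
    simpa only [pow_two, Pi.mul_def] using hz.mul hz
  have hu : HasFDerivAt (fun p : ℝ×ℝ×ℝ => p.1^2 + p.2.1^2) (0 : (ℝ×ℝ×ℝ) →L[ℝ] ℝ) p0 := by
    have h := hx2.add hy2
    have e : (p0.1 • Q1 + p0.1 • Q1) + (p0.2.1 • Q2 + p0.2.1 • Q2) = (0 : (ℝ×ℝ×ℝ) →L[ℝ] ℝ) := by
      refine ContinuousLinearMap.ext fun q => ?_
      simp [hp0]
    rwa [e] at h
  have hH : HasFDerivAt (Ha3 (-1)) (0 : (ℝ×ℝ×ℝ) →L[ℝ] ℝ) p0 := by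
    have hv : HasFDerivAt (fun p : ℝ×ℝ×ℝ => p.1^2+p.2.1^2+p.2.2^2+(-1:ℝ))
        ((0 : (ℝ×ℝ×ℝ) →L[ℝ] ℝ) + (p0.2.2 • Q3 + p0.2.2 • Q3)) p0 := (hu.add hz2).add_const (-1:ℝ)
    have h := hu.mul hv
    have e : (fun p : ℝ×ℝ×ℝ => p.1^2+p.2.1^2) p0 • ((0 : (ℝ×ℝ×ℝ) →L[ℝ] ℝ) + (p0.2.2 • Q3 + p0.2.2 • Q3))
        + (fun p : ℝ×ℝ×ℝ => p.1^2+p.2.1^2+p.2.2^2+(-1:ℝ)) p0 • (0 : (ℝ×ℝ×ℝ) →L[ℝ] ℝ)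
        = (0 : (ℝ×ℝ×ℝ) →L[ℝ] ℝ) := by
      refine ContinuousLinearMap.ext fun q => ?_
      simp [hp0]
    rw [e] at h
    exact h
  have hH0 : Ha3 (-1) p0 = 0 := by simp [Ha3, hp0]
  have hfH : HasFDerivAt (fun p : ℝ×ℝ×ℝ => f (Ha3 (-1) p)) (0 : (ℝ×ℝ×ℝ) →L[ℝ] ℝ) p0 := by
    have h := ((hf (Ha3 (-1) p0)).hasFDerivAt).comp p0 hH
    simpa [Function.comp_def] using h
  have hc1 : HasFDerivAt (fun p : ℝ×ℝ×ℝ => -2 * p.1 * p.2.2 - f (Ha3 (-1) p) * p.2.1)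
      ((-2*z0) • Q1 + (-(f 0)) • Q2) p0 := by
    have ha := (hx.const_mul (-2:ℝ)).mul hz
    have hb := hfH.mul hy
    have h := ha.sub hb
    have e : ((-2 : ℝ) * p0.1) • Q3 + p0.2.2 • ((-2:ℝ) • Q1)
        - (f (Ha3 (-1) p0) • Q2 + p0.2.1 • (0 : (ℝ×ℝ×ℝ) →L[ℝ] ℝ))
        = (-2*z0) • Q1 + (-(f 0)) • Q2 := by
      refine ContinuousLinearMap.ext fun q => ?_
      simp [hp0, hH0, Ha3]
      ring
    rwa [e] at h
  have hc2 : HasFDerivAt (fun p : ℝ×ℝ×ℝ => -2 * p.2.1 * p.2.2 + f (Ha3 (-1) p) * p.1)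
      ((f 0) • Q1 + (-2*z0) • Q2) p0 := by
    have ha := (hy.const_mul (-2:ℝ)).mul hz
    have hb := hfH.mul hx
    have h := ha.add hb
    have e : ((-2 : ℝ) * p0.2.1) • Q3 + p0.2.2 • ((-2:ℝ) • Q2)
        + (f (Ha3 (-1) p0) • Q1 + p0.1 • (0 : (ℝ×ℝ×ℝ) →L[ℝ] ℝ))
        = (f 0) • Q1 + (-2*z0) • Q2 := by
      refine ContinuousLinearMap.ext fun q => ?_
      simp [hp0, hH0, Ha3]
      ring
    rwa [e] at h
  have hc3 : HasFDerivAt (fun p : ℝ×ℝ×ℝ => 2 * (2 * (p.1^2+p.2.1^2) + p.2.2^2 + (-1:ℝ)))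
      ((4*z0) • Q3) p0 := by
    have h := (((hu.const_mul (2:ℝ)).add hz2).add_const (-1:ℝ)).const_mul (2:ℝ)
    have e : (2:ℝ) • ((2:ℝ) • (0 : (ℝ×ℝ×ℝ) →L[ℝ] ℝ) + (p0.2.2 • Q3 + p0.2.2 • Q3))
        = (4*z0) • Q3 := by
      refine ContinuousLinearMap.ext fun q => ?_
      simp [hp0]
      ring
    rwa [e] at h
  exact hc1.prodMk (hc2.prodMk hc3)

lemma clm3_isUnit (a11 a12 a21 a22 a33 : ℝ) (h2 : a11*a22 - a12*a21 ≠ 0) (h3 : a33 ≠ 0) :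
    IsUnit (clm3 a11 a12 a21 a22 a33) := by
  have hA : a22*a11 - a21*a12 ≠ 0 := by intro h; apply h2; linarith
  have hB : a22*a11 - a12*a21 ≠ 0 := by intro h; apply h2; linarith
  have hC : a11*a22 - a21*a12 ≠ 0 := by intro h; apply h2; linarith
  refine isUnit_iff_exists.mpr
    ⟨clm3 (a22/(a11*a22 - a12*a21)) (-a12/(a11*a22 - a12*a21))
      (-a21/(a11*a22 - a12*a21)) (a11/(a11*a22 - a12*a21)) (1/a33), ?_, ?_⟩ <;>
  · refine ContinuousLinearMap.ext fun q => ?_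
    simp only [ContinuousLinearMap.mul_apply, clm3_apply, ContinuousLinearMap.one_apply]
    refine Prod.ext ?_ (Prod.ext ?_ ?_) <;> simp <;> field_simp <;> ring


/-- For `a = −1` and differentiable `f`, the Fréchet derivative of `V_{−1,f}` at `(0,0,1)`
is given by the matrix `[[−2, −f(0), 0], [f(0), −2, 0], [0, 0, 4]]` with determinant
`4(4 + f(0)²) > 0`, and at `(0,0,−1)` by `[[2, −f(0), 0], [f(0), 2, 0], [0, 0, −4]]` with
determinant `−4(4 + f(0)²) < 0`; in particular both zeros are nondegenerate. -/
theorem stmt11 (f : ℝ → ℝ) (hf : Differentiable ℝ f) :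
    (∀ q : ℝ × ℝ × ℝ,
      fderiv ℝ (Vaf (-1) f) ((0 : ℝ), (0 : ℝ), (1 : ℝ)) q =
        (-2 * q.1 - f 0 * q.2.1, f 0 * q.1 - 2 * q.2.1, 4 * q.2.2)) ∧
    Matrix.det !![(-2 : ℝ), -f 0, 0; f 0, -2, 0; 0, 0, 4] = 4 * (4 + f 0 ^ 2) ∧
    0 < 4 * (4 + f 0 ^ 2) ∧
    (∀ q : ℝ × ℝ × ℝ,
      fderiv ℝ (Vaf (-1) f) ((0 : ℝ), (0 : ℝ), (-1 : ℝ)) q =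
        (2 * q.1 - f 0 * q.2.1, f 0 * q.1 + 2 * q.2.1, -4 * q.2.2)) ∧
    Matrix.det !![(2 : ℝ), -f 0, 0; f 0, 2, 0; 0, 0, -4] = -4 * (4 + f 0 ^ 2) ∧
    -4 * (4 + f 0 ^ 2) < 0 ∧
    IsUnit (fderiv ℝ (Vaf (-1) f) ((0 : ℝ), (0 : ℝ), (1 : ℝ))) ∧
    IsUnit (fderiv ℝ (Vaf (-1) f) ((0 : ℝ), (0 : ℝ), (-1 : ℝ))) := by
  have F1 : fderiv ℝ (Vaf (-1) f) ((0 : ℝ), (0 : ℝ), (1 : ℝ))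
      = clm3 (-2*1) (-(f 0)) (f 0) (-2*1) (4*1) := (keyD f hf 1).fderiv
  have F2 : fderiv ℝ (Vaf (-1) f) ((0 : ℝ), (0 : ℝ), (-1 : ℝ))
      = clm3 (-2*(-1)) (-(f 0)) (f 0) (-2*(-1)) (4*(-1)) := (keyD f hf (-1)).fderiv
  have hpos : (0:ℝ) < 4 * (4 + f 0 ^ 2) := by nlinarith [sq_nonneg (f 0)]
  refine ⟨?_, ?_, hpos, ?_, ?_, ?_, ?_, ?_⟩
  · intro q
    rw [F1, clm3_apply]
    refine Prod.ext ?_ (Prod.ext ?_ ?_) <;> simp <;> ring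
  · simp [Matrix.det_fin_three]; ring
  · intro q
    rw [F2, clm3_apply]
    refine Prod.ext ?_ (Prod.ext ?_ ?_) <;> simp <;> ring
  · simp [Matrix.det_fin_three]; ring
  · nlinarith [sq_nonneg (f 0)]
  · rw [F1]
    refine clm3_isUnit _ _ _ _ _ ?_ (by norm_num)
    nlinarith [sq_nonneg (f 0)]
  · rw [F2]
    refine clm3_isUnit _ _ _ _ _ ?_ (by norm_num)
    nlinarith [sq_nonneg (f 0)]
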